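/- For every function h from subsets of [n] to the reals with h(∅)=0, h is a normal polymatroid (a non-negative linear combination of step functions h_W for W ⊊ [n]) if and only if its Möbius inverse g, defined by g(X) = Σ_{Y ⊇ X} (-1)^{|Y∖X|} h(Y), satisfies: Σ_{X ⊆ [n]} g(X) = 0, g([n]) ≥ 0, and g(X) ≤ 0 for all X ≠ [n]. -/
import Mathlib
open Finset

lemma pow_sum_real {α : Type*} [DecidableEq α] (x : Finset α) :
    (∑ m ∈ x.powerset, (-1 : ℝ) ^ m.card) = if x = ∅ then 1 else 0 := by
  have := @Finset.sum_powerset_neg_one_pow_card α _ x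
  have h2 : ((∑ m ∈ x.powerset, (-1 : ℤ) ^ m.card : ℤ) : ℝ)
      = ∑ m ∈ x.powerset, (-1 : ℝ) ^ m.card := by push_cast; ring_nf
  rw [← h2, this]
  split <;> norm_num

lemma key1 {n : ℕ} (X Z : Finset (Fin n)) (hXZ : X ⊆ Z) :
    ∑ Y ∈ Finset.univ.filter (fun Y => X ⊆ Y ∧ Y ⊆ Z), (-1:ℝ)^((Y \ X).card)
      = if X = Z then 1 else 0 := by
  have hiff : X = Z ↔ Z \ X = ∅ := by
    rw [sdiff_eq_empty_iff_subset]
    exact ⟨fun h => h ▸ Finset.Subset.refl _, fun h => Finset.Subset.antisymm hXZ h⟩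
  rw [show (if X = Z then (1:ℝ) else 0) = (if Z \ X = ∅ then 1 else 0) by simp [hiff],
    ← pow_sum_real (Z \ X)]
  refine Finset.sum_nbij' (fun Y => Y \ X) (fun T => T ∪ X) ?_ ?_ ?_ ?_ ?_
  · intro Y hY
    simp only [mem_filter, mem_univ, true_and] at hY
    exact mem_powerset.2 (sdiff_subset_sdiff hY.2 (Finset.Subset.refl _))
  · intro T hT
    simp only [mem_powerset] at hT
    simp only [mem_filter, mem_univ, true_and]
    exact ⟨Finset.subset_union_right, Finset.union_subset (hT.trans Finset.sdiff_subset) hXZ⟩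
  · intro Y hY
    simp only [mem_filter, mem_univ, true_and] at hY
    exact Finset.sdiff_union_of_subset hY.1
  · intro T hT
    simp only [mem_powerset] at hT
    show (T ∪ X) \ X = T
    rw [Finset.union_sdiff_right]
    exact Finset.sdiff_eq_self_of_disjoint (Finset.disjoint_of_subset_left hT sdiff_disjoint)
  · intros; rfl

lemma key1' {n : ℕ} (X Z : Finset (Fin n)) :
    ∑ Y ∈ Finset.univ.filter (fun Y => X ⊆ Y ∧ Y ⊆ Z), (-1:ℝ)^((Y \ X).card)
      = if X = Z then 1 else 0 := by
  by_cases hXZ : X ⊆ Z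
  · exact key1 X Z hXZ
  · have he : Finset.univ.filter (fun Y : Finset (Fin n) => X ⊆ Y ∧ Y ⊆ Z) = ∅ :=
      Finset.filter_eq_empty_iff.2 (fun {Y} _ => fun h => hXZ (h.1.trans h.2))
    rw [he, Finset.sum_empty, if_neg (fun h => hXZ (by rw [h]))]

lemma key2 {n : ℕ} (X Z : Finset (Fin n)) (hXZ : X ⊆ Z) :
    ∑ Y ∈ Finset.univ.filter (fun Y => X ⊆ Y ∧ Y ⊆ Z), (-1:ℝ)^((Z \ Y).card)
      = if X = Z then 1 else 0 := by
  have hiff : X = Z ↔ Z \ X = ∅ := by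
    rw [sdiff_eq_empty_iff_subset]
    exact ⟨fun h => h ▸ Finset.Subset.refl _, fun h => Finset.Subset.antisymm hXZ h⟩
  rw [show (if X = Z then (1:ℝ) else 0) = (if Z \ X = ∅ then 1 else 0) by simp [hiff],
    ← pow_sum_real (Z \ X)]
  refine Finset.sum_nbij' (fun Y => Z \ Y) (fun T => Z \ T) ?_ ?_ ?_ ?_ ?_
  · intro Y hY
    simp only [mem_filter, mem_univ, true_and] at hY
    exact mem_powerset.2 (sdiff_subset_sdiff (Finset.Subset.refl _) hY.1)
  · intro T hT
    simp only [mem_powerset] at hT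
    simp only [mem_filter, mem_univ, true_and]
    refine ⟨Finset.subset_sdiff.2 ⟨hXZ, ?_⟩, Finset.sdiff_subset⟩
    exact Finset.disjoint_of_subset_right hT disjoint_sdiff
  · intro Y hY
    simp only [mem_filter, mem_univ, true_and] at hY
    exact Finset.sdiff_sdiff_eq_self hY.2
  · intro T hT
    simp only [mem_powerset] at hT
    exact Finset.sdiff_sdiff_eq_self (hT.trans Finset.sdiff_subset)
  · intros; rfl

/-- The step function at `W`: `0` on subsets of `W`, `1` otherwise. -/
def stepFn {n : ℕ} (W X : Finset (Fin n)) : ℝ := if X ⊆ W then 0 else 1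

/-- A normal polymatroid: a non-negative linear combination of step functions `h_W`, `W ⊊ [n]`. -/
def IsNormal {n : ℕ} (h : Finset (Fin n) → ℝ) : Prop :=
  ∃ c : Finset (Fin n) → ℝ, (∀ W, 0 ≤ c W) ∧
    ∀ X, h X = ∑ W ∈ Finset.univ.filter (fun W => W ≠ Finset.univ), c W * stepFn W X

lemma inversion {n : ℕ} (h g : Finset (Fin n) → ℝ)
    (hg : ∀ X, g X = ∑ Y ∈ Finset.univ.filter (fun Y => X ⊆ Y),
      (-1 : ℝ) ^ ((Y \ X).card) * h Y) (X : Finset (Fin n)) :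
    ∑ Y ∈ Finset.univ.filter (fun Y => X ⊆ Y), g Y = h X := by
  simp_rw [hg]
  rw [Finset.sum_comm' (t' := Finset.univ.filter (fun Z => X ⊆ Z))
    (s' := fun Z => Finset.univ.filter (fun Y => X ⊆ Y ∧ Y ⊆ Z))
    (by intro Y Z
        simp only [mem_filter, mem_univ, true_and]
        constructor
        · rintro ⟨h1, h2⟩; exact ⟨⟨h1, h2⟩, h1.trans h2⟩
        · rintro ⟨⟨h1, h2⟩, _⟩; exact ⟨h1, h2⟩)]
  have hstep : ∀ Z ∈ Finset.univ.filter (fun Z => X ⊆ Z),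
      (∑ Y ∈ Finset.univ.filter (fun Y => X ⊆ Y ∧ Y ⊆ Z), (-1:ℝ)^((Z \ Y).card) * h Z)
        = if X = Z then h Z else 0 := by
    intro Z hZ
    rw [← Finset.sum_mul, key2 X Z (by simpa using hZ)]
    split_ifs <;> simp
  rw [Finset.sum_congr rfl hstep]
  rw [Finset.sum_eq_single_of_mem X (by simp)]
  · rw [if_pos rfl]
  · intro b _ hb
    exact if_neg (fun he => hb he.symm)

theorem normal_iff_mobius {n : ℕ} (h : Finset (Fin n) → ℝ) (h0 : h ∅ = 0)
    (g : Finset (Fin n) → ℝ)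
    (hg : ∀ X, g X = ∑ Y ∈ Finset.univ.filter (fun Y => X ⊆ Y),
      (-1 : ℝ) ^ ((Y \ X).card) * h Y) :
    IsNormal h ↔
      ((∑ X : Finset (Fin n), g X) = 0 ∧ 0 ≤ g Finset.univ ∧
        ∀ X, X ≠ Finset.univ → g X ≤ 0) := by
  set T : Finset (Finset (Fin n)) := Finset.univ.filter (fun W => W ≠ Finset.univ) with hT
  constructor
  · rintro ⟨c, hc0, hc⟩
    -- compute g in terms of c
    have step : ∀ X W : Finset (Fin n),
        ∑ Y ∈ Finset.univ.filter (fun Y => X ⊆ Y), (-1:ℝ)^((Y \ X).card) * stepFn W Y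
          = (if X = Finset.univ then 1 else 0) - (if X = W then 1 else 0) := by
      intro X W
      have e1 : ∀ Y ∈ Finset.univ.filter (fun Y => X ⊆ Y),
          (-1:ℝ)^((Y \ X).card) * stepFn W Y
            = (-1:ℝ)^((Y \ X).card) - (if Y ⊆ W then (-1:ℝ)^((Y \ X).card) else 0) := by
        intro Y _
        unfold stepFn
        split_ifs <;> ring
      rw [Finset.sum_congr rfl e1, Finset.sum_sub_distrib]
      congr 1
      · have : Finset.univ.filter (fun Y : Finset (Fin n) => X ⊆ Y)
            = Finset.univ.filter (fun Y => X ⊆ Y ∧ Y ⊆ Finset.univ) := by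
          apply Finset.filter_congr
          intro Y _
          simp [Finset.subset_univ]
        rw [this, key1' X Finset.univ]
      · rw [← Finset.sum_filter, Finset.filter_filter, key1' X W]
    have gval : ∀ X, g X = ∑ W ∈ T,
        c W * ((if X = Finset.univ then (1:ℝ) else 0) - (if X = W then 1 else 0)) := by
      intro X
      rw [hg X]
      have : ∀ Y ∈ Finset.univ.filter (fun Y => X ⊆ Y),
          (-1:ℝ)^((Y \ X).card) * h Y
            = ∑ W ∈ T, c W * ((-1:ℝ)^((Y \ X).card) * stepFn W Y) := by
        intro Y _
        rw [hc Y, Finset.mul_sum]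
        exact Finset.sum_congr rfl (fun W _ => by ring)
      rw [Finset.sum_congr rfl this, Finset.sum_comm]
      refine Finset.sum_congr rfl (fun W _ => ?_)
      rw [← Finset.mul_sum, step X W]
    refine ⟨?_, ?_, ?_⟩
    · rw [Finset.sum_congr rfl (fun X _ => gval X), Finset.sum_comm]
      apply Finset.sum_eq_zero
      intro W hW
      rw [← Finset.mul_sum, Finset.sum_sub_distrib]
      have hWu : W ≠ Finset.univ := (Finset.mem_filter.1 hW).2
      simp [Finset.sum_ite_eq]
    · rw [gval Finset.univ]
      apply Finset.sum_nonneg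
      intro W hW
      have hWu : W ≠ Finset.univ := (Finset.mem_filter.1 hW).2
      rw [if_pos rfl, if_neg (fun he => hWu he.symm)]
      simpa using hc0 W
    · intro X hX
      rw [gval X]
      apply Finset.sum_nonpos
      intro W hW
      rw [if_neg hX]
      split_ifs with he
      · have := hc0 W; nlinarith
      · simp
  · rintro ⟨hsum, hgu, hneg⟩
    refine ⟨fun W => if W = Finset.univ then 0 else -g W, ?_, ?_⟩
    · intro W
      dsimp only
      split_ifs with hW
      · exact le_refl _
      · simpa using hneg W hW
    · intro X
      have hinv := inversion h g hg X
      have hsplit := Finset.sum_filter_add_sum_filter_not Finset.univ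
        (fun Y : Finset (Fin n) => X ⊆ Y) g
      have hX : h X = -∑ Y ∈ Finset.univ.filter (fun Y => ¬ X ⊆ Y), g Y := by
        rw [← hinv]; rw [hsum] at hsplit; linarith
      rw [hX]
      have e1 : ∀ W ∈ T,
          (if W = Finset.univ then (0:ℝ) else -g W) * stepFn W X
            = if ¬ X ⊆ W then -g W else 0 := by
        intro W hW
        have hWu : W ≠ Finset.univ := (Finset.mem_filter.1 hW).2
        rw [if_neg hWu]
        unfold stepFn
        by_cases hXW : X ⊆ W
        · rw [if_pos hXW, if_neg (by simpa using hXW)]; ring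
        · rw [if_neg hXW, if_pos hXW]; ring
      rw [Finset.sum_congr rfl e1, ← Finset.sum_filter, hT, Finset.filter_filter]
      have e2 : Finset.univ.filter (fun W : Finset (Fin n) => W ≠ Finset.univ ∧ ¬ X ⊆ W)
          = Finset.univ.filter (fun W => ¬ X ⊆ W) := by
        apply Finset.filter_congr
        intro W _
        constructor
        · exact And.right
        · exact fun hw => ⟨fun he => hw (he ▸ Finset.subset_univ X), hw⟩
      rw [e2, Finset.sum_neg_distrib]
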